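/- Let M_1, …, M_n be DFAs over a common alphabet Σ, and let G be the labeled graph obtained from the second reduction construction applied to M_1, …, M_n. Then ⋃_{i=1}^n L(M_i) = Σ* if and only if ⟨G⟩ has a deterministic presentation with exactly 2 vertices. -/

import Mathlib

/-- A labeled graph over vertex type `V` and alphabet `A`, given by its
labeled-edge relation: `Edge p a q` means there is an edge labeled `a`
from `p` to `q`. -/
structure LabeledGraph (V A : Type) where
  Edge : V → A → V → Prop

namespace LabeledGraph

variable {V A : Type}

/-- `G.Walk p w q` : there is a (finite) path from `p` to `q` labeled `w`. -/
def Walk (G : LabeledGraph V A) : V → List A → V → Prop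
  | p, [], q => p = q
  | p, a :: w, q => ∃ r, G.Edge p a r ∧ Walk G r w q

/-- The follower set of a vertex: labels of finite paths starting at `q`. -/
def follower (G : LabeledGraph V A) (q : V) : Set (List A) :=
  { w | ∃ q', G.Walk q w q' }

/-- The transition action on sets of vertices: `S·w`. -/
def transSet (G : LabeledGraph V A) (S : Set V) (w : List A) : Set V :=
  { q' | ∃ q ∈ S, G.Walk q w q' }

/-- `G` is deterministic (right-resolving). -/
def Deterministic (G : LabeledGraph V A) : Prop :=
  ∀ p a q q', G.Edge p a q → G.Edge p a q' → q = q'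

/-- `G` is essential: every vertex has an outgoing and an incoming edge. -/
def Essential (G : LabeledGraph V A) : Prop :=
  ∀ q, (∃ a r, G.Edge q a r) ∧ (∃ a p, G.Edge p a q)

/-- The sofic shift presented by `G`: labels of bi-infinite paths. -/
def shift (G : LabeledGraph V A) : Set (ℤ → A) :=
  { x | ∃ v : ℤ → V, ∀ j : ℤ, G.Edge (v j) (x j) (v (j + 1)) }

/-- `w` is a synchronizing word for `G`: `Q_G · w` is a singleton. -/
def SyncWord (G : LabeledGraph V A) (w : List A) : Prop :=
  ∃ r, G.transSet Set.univ w = {r}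

/-- A vertex `q` is synchronizing: some word synchronizes to `q`. -/
def SyncVertex (G : LabeledGraph V A) (q : V) : Prop :=
  ∃ w, G.transSet Set.univ w = {q}

/-- `G` is synchronizing: every vertex is synchronizing. -/
def Synchronizing (G : LabeledGraph V A) : Prop :=
  ∀ q, G.SyncVertex q

/-- `G` is follower-separated. -/
def FollowerSeparated (G : LabeledGraph V A) : Prop :=
  ∀ p q, G.follower p = G.follower q → p = q

/-- `G` is irreducible (strongly connected). -/
def StronglyConnected (G : LabeledGraph V A) : Prop :=
  ∀ p q, ∃ w, G.Walk p w q

/-- `q` is reachable from `p`. -/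
def Reachable (G : LabeledGraph V A) (p q : V) : Prop :=
  ∃ w, G.Walk p w q

/-- `C` is an irreducible component: an equivalence class of mutual reachability. -/
def IsIrredComponent (G : LabeledGraph V A) (C : Set V) : Prop :=
  ∃ p, C = { q | G.Reachable p q ∧ G.Reachable q p }

/-- `C` is terminal: everything reachable from `C` lies in `C`. -/
def TerminalSet (G : LabeledGraph V A) (C : Set V) : Prop :=
  ∀ p ∈ C, ∀ q, G.Reachable p q → q ∈ C

/-- `C` is initial: everything that reaches `C` lies in `C`. -/
def InitialSet (G : LabeledGraph V A) (C : Set V) : Prop :=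
  ∀ q ∈ C, ∀ p, G.Reachable p q → p ∈ C

/-- Subgraph induced by a set `P` of vertices. -/
def induce (G : LabeledGraph V A) (P : Set V) : LabeledGraph P A where
  Edge := fun p a q => G.Edge p.1 a q.1

/-- The graph `Ĝ`: vertices are ordered pairs of distinct vertices of `G`,
with an edge labeled `a` from `(p₁,p₂)` to `(q₁,q₂)` iff `G` has edges labeled
`a` from `p₁` to `q₁` and from `p₂` to `q₂`. -/
def pairGraph (G : LabeledGraph V A) : LabeledGraph { pq : V × V // pq.1 ≠ pq.2 } A where
  Edge := fun x a y => G.Edge x.1.1 a y.1.1 ∧ G.Edge x.1.2 a y.1.2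

end LabeledGraph

/-- The word `w` appears in the bi-infinite sequence `x`. -/
def AppearsIn {A : Type} (w : List A) (x : ℤ → A) : Prop :=
  ∃ i : ℤ, ∀ n : Fin w.length, x (i + (n : ℕ)) = w.get n

/-- The language of a subset of the full shift: all finite words appearing
in some point of `X`. -/
def lang {A : Type} (X : Set (ℤ → A)) : Set (List A) :=
  { w | ∃ x ∈ X, AppearsIn w x }

/-- `X` is a shift space. -/
def IsShiftSpace {A : Type} (X : Set (ℤ → A)) : Prop :=
  ∃ F : Set (List A), X = { x | ∀ w ∈ F, ¬ AppearsIn w x }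

/-- `X` is a shift of finite type. -/
def IsSFT {A : Type} (X : Set (ℤ → A)) : Prop :=
  ∃ F : Set (List A), F.Finite ∧ X = { x | ∀ w ∈ F, ¬ AppearsIn w x }

/-- `w` is intrinsically synchronizing for `X`. -/
def IntrinsicallySync {A : Type} (X : Set (ℤ → A)) (w : List A) : Prop :=
  w ∈ lang X ∧ ∀ u v, u ++ w ∈ lang X → w ++ v ∈ lang X → u ++ (w ++ v) ∈ lang X

/-- `X` is an irreducible shift space. -/
def IrreducibleShift {A : Type} (X : Set (ℤ → A)) : Prop :=
  ∀ u ∈ lang X, ∀ v ∈ lang X, ∃ w, u ++ (w ++ v) ∈ lang X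

/-- The follower set of a word `u` in `X`. -/
def followerX {A : Type} (X : Set (ℤ → A)) (u : List A) : Set (List A) :=
  { w | u ++ w ∈ lang X }

/-- `X` is `M`-step: every word of `B(X)` of length at least `M` is
intrinsically synchronizing for `X`. -/
def MStep {A : Type} (X : Set (ℤ → A)) (M : ℕ) : Prop :=
  ∀ w ∈ lang X, M ≤ w.length → IntrinsicallySync X w

/-- A deterministic finite automaton over state type `Q` and alphabet `A`. -/
structure DFA' (Q A : Type) where
  step : Q → A → Q
  start : Q
  accept : Set Q

/-- Extended transition function. -/
def DFA'.evalFrom {Q A : Type} (M : DFA' Q A) (q : Q) (w : List A) : Q :=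
  w.foldl M.step q

/-- The language of a DFA. -/
def DFA'.lang {Q A : Type} (M : DFA' Q A) : Set (List A) :=
  { w | M.evalFrom M.start w ∈ M.accept }

/-- Alphabet `Σ ∪ {◁, ▷, ℓ, ⋆}`. -/
inductive SymB (A : Type) : Type
  | letter : A → SymB A
  | lm : SymB A    -- ◁
  | rm : SymB A    -- ▷
  | ell : SymB A   -- ℓ
  | star : SymB A  -- ⋆

/-- Vertices of the second reduction construction: the terminal state `t`,
the special state `s*`, and the DFA states. -/
inductive V2 {n : ℕ} (Q : Fin n → Type) : Type
  | t : V2 Q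
  | sstar : V2 Q
  | st : (i : Fin n) → Q i → V2 Q

/-- Edges of the second reduction construction. -/
inductive Red2Edge {n : ℕ} {Q : Fin n → Type} {A : Type} (M : ∀ i, DFA' (Q i) A) :
    V2 Q → SymB A → V2 Q → Prop
  /-- self loop labeled `⋆` on `t` -/
  | tLoop : Red2Edge M .t .star .t
  /-- self loop labeled `a` on `s*` for each `a ∈ Σ` -/
  | sstarLetter (a : A) : Red2Edge M .sstar (.letter a) .sstar
  /-- self loop labeled `ℓ` on `s*` -/
  | sstarEll : Red2Edge M .sstar .ell .sstar
  /-- edge labeled `▷` from `s*` to `t` -/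
  | sstarExit : Red2Edge M .sstar .rm .t
  /-- the embedded DFA transitions -/
  | dfaStep (i : Fin n) (q : Q i) (a : A) :
      Red2Edge M (.st i q) (.letter a) (.st i ((M i).step q a))
  /-- edge labeled `◁` from each state of `M_i` to `s_i` -/
  | back (i : Fin n) (q : Q i) : Red2Edge M (.st i q) .lm (.st i ((M i).start))
  /-- edge labeled `▷` from each accepting state of `M_i` to `t` -/
  | exitAcc (i : Fin n) (q : Q i) :
      q ∈ (M i).accept → Red2Edge M (.st i q) .rm .t
  /-- self loop labeled `ℓ` on each DFA state -/
  | ellLoop (i : Fin n) (q : Q i) : Red2Edge M (.st i q) .ell (.st i q)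

/-- The labeled graph `G` of the second reduction construction. -/
def Red2 {n : ℕ} {Q : Fin n → Type} {A : Type} (M : ∀ i, DFA' (Q i) A) :
    LabeledGraph (V2 Q) (SymB A) where
  Edge := Red2Edge M

/-- The two-vertex graph `H` (vertices `false = q₁` and `true = q₂`):
self loops on `q₁` labeled `◁`, `ℓ`, and each `a ∈ Σ`; an edge labeled `▷`
from `q₁` to `q₂`; and a self loop labeled `⋆` on `q₂`. -/
def H2 (A : Type) : LabeledGraph Bool (SymB A) where
  Edge := fun x c y =>
    (x = false ∧ y = false ∧ (c = .lm ∨ c = .ell ∨ ∃ a, c = .letter a)) ∨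
    (x = false ∧ y = true ∧ c = .rm) ∨
    (x = true ∧ y = true ∧ c = .star)

section Helpers

open LabeledGraph

variable {V A : Type}

/-- Compactness: if for every `N` there is a run valid on `[-N, ∞)`, there is a full run. -/
lemma compact_run [Finite V] [Nonempty V] (G : LabeledGraph V A) (x : ℤ → A)
    (h : ∀ N : ℕ, ∃ v : ℤ → V, ∀ j : ℤ, -(N:ℤ) ≤ j → G.Edge (v j) (x j) (v (j+1))) :
    x ∈ G.shift := by
  classical
  choose vN hvN using h
  haveI : Filter.NeBot (Filter.cofinite : Filter ℕ) := Nat.cofinite_eq_atTop ▸ Filter.atTop_neBot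
  let U : Ultrafilter ℕ := Ultrafilter.of Filter.cofinite
  have hU : (U : Filter ℕ) ≤ Filter.cofinite := Ultrafilter.of_le _
  have key : ∀ j : ℤ, ∃ c : V, {N : ℕ | vN N j = c} ∈ U := by
    intro j
    by_contra hc
    push_neg at hc
    have h1 : ∀ c : V, {N : ℕ | vN N j = c}ᶜ ∈ U := fun c =>
      Ultrafilter.compl_mem_iff_notMem.2 (hc c)
    have h2 : (⋂ c : V, {N : ℕ | vN N j = c}ᶜ) ∈ U := (Filter.iInter_mem).2 h1
    have h3 : (⋂ c : V, {N : ℕ | vN N j = c}ᶜ) = ∅ := by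
      ext N; simp
    rw [h3] at h2
    exact Filter.empty_notMem (U : Filter ℕ) h2
  choose v hv using key
  refine ⟨v, fun j => ?_⟩
  have h3 : {N : ℕ | -(N:ℤ) ≤ j} ∈ U := by
    apply hU
    rw [Filter.mem_cofinite]
    have hsub : {N : ℕ | -(N:ℤ) ≤ j}ᶜ ⊆ Set.Iio (j.natAbs + 1) := by
      intro N hN; simp only [Set.mem_compl_iff, Set.mem_setOf_eq, not_le] at hN
      simp only [Set.mem_Iio]; omega
    exact (Set.finite_Iio _).subset hsub
  have hmem : {N : ℕ | vN N j = v j} ∩ ({N : ℕ | vN N (j+1) = v (j+1)} ∩ {N : ℕ | -(N:ℤ) ≤ j})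
      ∈ U := Filter.inter_mem (hv j) (Filter.inter_mem (hv (j+1)) h3)
  obtain ⟨N, hN1, hN2, hN3⟩ := Filter.nonempty_of_mem hmem
  rw [← hN1, ← hN2]
  exact hvN N j hN3

lemma exists_fwd_run (G : LabeledGraph V A) (hE : G.Essential) (r : V) :
    ∃ (x : ℕ → A) (v : ℕ → V), v 0 = r ∧ ∀ k, G.Edge (v k) (x k) (v (k+1)) := by
  classical
  have c : ∀ q : V, ∃ p : A × V, G.Edge q p.1 p.2 := by
    intro q; obtain ⟨⟨a, r', h⟩, _⟩ := hE q; exact ⟨(a, r'), h⟩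
  choose f hf using c
  exact ⟨fun k => (f (Nat.rec r (fun _ prev => (f prev).2) k)).1,
         fun k => Nat.rec r (fun _ prev => (f prev).2) k, rfl, fun k => hf _⟩

lemma exists_bwd_run (G : LabeledGraph V A) (hE : G.Essential) (p : V) :
    ∃ (x : ℕ → A) (v : ℕ → V), v 0 = p ∧ ∀ k, G.Edge (v (k+1)) (x k) (v k) := by
  classical
  have c : ∀ q : V, ∃ pr : A × V, G.Edge pr.2 pr.1 q := by
    intro q; obtain ⟨_, ⟨a, p', h⟩⟩ := hE q; exact ⟨(a, p'), h⟩
  choose f hf using c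
  exact ⟨fun k => (f (Nat.rec p (fun _ prev => (f prev).2) k)).1,
         fun k => Nat.rec p (fun _ prev => (f prev).2) k, rfl, fun k => hf _⟩

/-- In an essential graph, any 2-edge walk appears in a point of the shift. -/
lemma realize2 (G : LabeledGraph V A) (hE : G.Essential) {p q r : V} {b b' : A}
    (h1 : G.Edge p b q) (h2 : G.Edge q b' r) :
    ∃ x ∈ G.shift, x 0 = b ∧ x 1 = b' := by
  obtain ⟨xf, vf, hvf0, hvf⟩ := exists_fwd_run G hE r
  obtain ⟨xb, vb, hvb0, hvb⟩ := exists_bwd_run G hE p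
  refine ⟨fun j => if 2 ≤ j then xf (j-2).toNat else if j = 1 then b' else if j = 0 then b
      else xb (-(j+1)).toNat,
    ⟨fun j => if 2 ≤ j then vf (j-2).toNat else if j = 1 then q else if j = 0 then p
      else vb (-j).toNat, ?_⟩, by norm_num, by norm_num⟩
  intro j
  rcases le_or_gt 2 j with hj | hj
  · have e1 : (2:ℤ) ≤ j + 1 := by omega
    have e2 : (j + 1 - 2).toNat = (j-2).toNat + 1 := by omega
    simp only [if_pos hj, if_pos e1, e2]
    exact hvf _
  · rcases lt_trichotomy j 0 with hj0 | hj0 | hj0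
    · -- j ≤ -1
      have e0 : ¬ (2:ℤ) ≤ j := by omega
      have e1 : j ≠ 1 := by omega
      have e2 : j ≠ 0 := by omega
      rcases eq_or_lt_of_le (show j ≤ -1 by omega) with hj1 | hj1
      · subst hj1
        norm_num
        have hb := hvb 0
        rw [hvb0] at hb
        exact hb
      · have f0 : ¬ (2:ℤ) ≤ j + 1 := by omega
        have f1 : j + 1 ≠ 1 := by omega
        have f2 : j + 1 ≠ 0 := by omega
        simp only [if_neg e0, if_neg e1, if_neg e2, if_neg f0, if_neg f1, if_neg f2]
        have g1 : (-j).toNat = (-(j+1)).toNat + 1 := by omega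
        have g2 : (-(j+1)) = -j-1 := by ring
        rw [g1]
        exact hvb _
    · subst hj0
      norm_num
      exact h1
    · have hj1 : j = 1 := by omega
      subst hj1
      norm_num
      rw [hvf0]
      exact h2

end Helpers
section Red2Lemmas

open LabeledGraph

variable {n : ℕ} {Q : Fin n → Type} {A : Type} {M : ∀ i, DFA' (Q i) A}

lemma red2_star_inv {p r : V2 Q} (h : Red2Edge M p .star r) : p = .t ∧ r = .t := by
  cases h; exact ⟨rfl, rfl⟩

lemma red2_rm_inv {p r : V2 Q} (h : Red2Edge M p .rm r) : r = .t := by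
  cases h <;> rfl

lemma red2_t_src_inv {c : SymB A} {r : V2 Q} (h : Red2Edge M .t c r) : c = .star := by
  cases h; rfl

lemma red2_lm_inv {p r : V2 Q} (h : Red2Edge M p .lm r) : ∃ i, r = .st i (M i).start := by
  cases h with
  | back i q => exact ⟨i, rfl⟩

lemma red2_rm_from_st {i : Fin n} {q : Q i} {r : V2 Q} (h : Red2Edge M (.st i q) .rm r) :
    q ∈ (M i).accept := by
  cases h; assumption

lemma red2_letter_from_st {i : Fin n} {q : Q i} {a : A} {r : V2 Q}
    (h : Red2Edge M (.st i q) (.letter a) r) : r = .st i ((M i).step q a) := by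
  cases h; rfl

/-- In `⟨G⟩`, any symbol following a `⋆` or `▷` is a `⋆`. -/
lemma redG_after (M : ∀ i, DFA' (Q i) A) {x : ℤ → SymB A} (hx : x ∈ (Red2 M).shift)
    (j : ℤ) (h : x j = .star ∨ x j = .rm) : x (j+1) = .star := by
  obtain ⟨v, hv⟩ := hx
  have h1 := hv j
  have h2 := hv (j+1)
  have hvt : v (j+1) = V2.t := by
    rcases h with h | h <;> rw [h] at h1
    · exact (red2_star_inv h1).2
    · exact red2_rm_inv h1
  rw [hvt] at h2
  exact red2_t_src_inv h2

/-- One step of the deterministic action of symbols on DFA states. -/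
def fstep (M : ∀ i, DFA' (Q i) A) (i : Fin n) : Q i → SymB A → Q i := fun q c =>
  match c with
  | .letter a => (M i).step q a
  | .lm => (M i).start
  | _ => q

/-- The "strip" action on accumulated words. -/
def gstep (A : Type) : List A → SymB A → List A := fun acc c =>
  match c with
  | .letter a => acc ++ [a]
  | .lm => []
  | _ => acc

lemma fold_strip (M : ∀ i, DFA' (Q i) A) (i : Fin n) :
    ∀ (w : List (SymB A)) (acc : List A),
    List.foldl (fstep M i) ((M i).evalFrom (M i).start acc) w
      = (M i).evalFrom (M i).start (List.foldl (gstep A) acc w) := by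
  intro w
  induction w with
  | nil => intro acc; rfl
  | cons c w ih =>
    intro acc
    cases c with
    | letter a =>
      have hs : fstep M i ((M i).evalFrom (M i).start acc) (.letter a)
          = (M i).evalFrom (M i).start (acc ++ [a]) := by
        simp [fstep, DFA'.evalFrom, List.foldl_append]
      simp only [List.foldl_cons]
      rw [hs]
      exact ih (acc ++ [a])
    | lm =>
      simp only [List.foldl_cons]
      exact ih []
    | rm =>
      simp only [List.foldl_cons]
      exact ih acc
    | ell =>
      simp only [List.foldl_cons]
      exact ih acc
    | star =>
      simp only [List.foldl_cons]
      exact ih acc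

lemma evalFrom_take_succ {Qi : Type} (Mi : DFA' Qi A) (s : Qi) (u : List A) (k : ℕ)
    (hk : k < u.length) :
    Mi.evalFrom s (u.take (k+1)) = Mi.step (Mi.evalFrom s (u.take k)) (u.get ⟨k, hk⟩) := by
  show List.foldl Mi.step s (u.take (k+1)) = Mi.step (List.foldl Mi.step s (u.take k)) (u.get ⟨k, hk⟩)
  rw [List.take_succ, List.getElem?_eq_getElem hk, List.foldl_append]
  rfl

/-- Extraction: a point of `⟨G⟩` of shape `… ◁ u ▷ …` forces `u` to be accepted. -/
lemma extract (M : ∀ i, DFA' (Q i) A) (u : List A) (x : ℤ → SymB A)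
    (hx : x ∈ (Red2 M).shift)
    (h0 : x 0 = .lm)
    (h1 : ∀ k : ℕ, (hk : k < u.length) → x (1 + (k:ℤ)) = .letter (u.get ⟨k, hk⟩))
    (h2 : x (1 + (u.length:ℤ)) = .rm) : ∃ i, u ∈ (M i).lang := by
  obtain ⟨v, hv⟩ := hx
  have e0 := hv 0
  rw [h0] at e0
  obtain ⟨i, hi⟩ := red2_lm_inv e0
  have key : ∀ k : ℕ, k ≤ u.length → v (1 + (k:ℤ)) = .st i ((M i).evalFrom (M i).start (u.take k)) := by
    intro k
    induction k with
    | zero =>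
      intro _
      simpa [DFA'.evalFrom] using hi
    | succ k ih =>
      intro hk
      have hk' : k < u.length := by omega
      have ek := hv (1 + (k:ℤ))
      rw [h1 k hk', ih (by omega)] at ek
      have := red2_letter_from_st ek
      rw [← evalFrom_take_succ (M i) (M i).start u k hk'] at this
      have harith : (1:ℤ) + (k:ℤ) + 1 = 1 + ((k+1:ℕ):ℤ) := by push_cast; ring
      rw [harith] at this
      exact this
  have efin := hv (1 + (u.length:ℤ))
  rw [h2, key u.length le_rfl, List.take_length] at efin
  exact ⟨i, red2_rm_from_st efin⟩

end Red2Lemmas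
section Points

open LabeledGraph

variable {n : ℕ} {Q : Fin n → Type} {A : Type}

/-- The point `ℓ^∞ ◁ u ℓ^∞` (with `◁` at position `0`, `u` at positions `1..|u|`). -/
def yseq (u : List A) : ℤ → SymB A := fun j =>
  if h : 1 ≤ j ∧ j ≤ (u.length:ℤ) then .letter (u.get ⟨(j-1).toNat, by omega⟩)
  else if j = 0 then .lm else .ell

/-- The point `ℓ^∞ ▷ ⋆^∞` (with `▷` at position `0`). -/
def zseq (A : Type) : ℤ → SymB A := fun j =>
  if j < 0 then .ell else if j = 0 then .rm else .star

/-- The point `ℓ^∞ ◁ u ▷ ⋆^∞`. -/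
def xseq (u : List A) : ℤ → SymB A := fun j =>
  if j ≤ (u.length:ℤ) then yseq u j else if j = (u.length:ℤ)+1 then .rm else .star

lemma yseq_mem (M : ∀ i, DFA' (Q i) A) (hn : 0 < n) (u : List A) :
    yseq u ∈ (Red2 M).shift := by
  refine ⟨fun j => V2.st ⟨0,hn⟩ ((M ⟨0,hn⟩).evalFrom (M ⟨0,hn⟩).start (u.take (j-1).toNat)),
    fun j => ?_⟩
  by_cases h1 : 1 ≤ j ∧ j ≤ (u.length:ℤ)
  · simp only [yseq, dif_pos h1]
    have hk : (j-1).toNat < u.length := by omega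
    have ht : (j+1-1).toNat = (j-1).toNat + 1 := by omega
    rw [ht, evalFrom_take_succ (M ⟨0,hn⟩) _ u _ hk]
    exact Red2Edge.dfaStep ⟨0,hn⟩ _ _
  · simp only [yseq, dif_neg h1]
    by_cases h2 : j = 0
    · subst h2
      simp only [if_pos rfl]
      have e1 : ((0:ℤ)-1).toNat = 0 := by omega
      have e2 : ((0:ℤ)+1-1).toNat = 0 := by omega
      rw [e1, e2]
      exact Red2Edge.back ⟨0,hn⟩ _
    · rw [if_neg h2]
      have he : (j+1-1).toNat = (j-1).toNat ∨
          (u.length ≤ (j-1).toNat ∧ u.length ≤ (j+1-1).toNat) := by omega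
      rcases he with he | ⟨ha, hb⟩
      · rw [he]; exact Red2Edge.ellLoop ⟨0,hn⟩ _
      · rw [List.take_of_length_le ha, List.take_of_length_le hb]
        exact Red2Edge.ellLoop ⟨0,hn⟩ _

lemma zseq_mem (M : ∀ i, DFA' (Q i) A) : zseq A ∈ (Red2 M).shift := by
  refine ⟨fun j => if j ≤ 0 then V2.sstar else V2.t, fun j => ?_⟩
  rcases lt_trichotomy j 0 with h | h | h
  · have h1 : j ≤ 0 := by omega
    have h2 : j + 1 ≤ 0 := by omega
    simp only [zseq, if_pos h, if_pos h1, if_pos h2]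
    exact Red2Edge.sstarEll
  · subst h
    norm_num [zseq]
    exact Red2Edge.sstarExit
  · have h0 : ¬ j < 0 := by omega
    have h1 : j ≠ 0 := by omega
    have h2 : ¬ j ≤ 0 := by omega
    have h3 : ¬ j + 1 ≤ 0 := by omega
    simp only [zseq, if_neg h0, if_neg h1, if_neg h2, if_neg h3]
    exact Red2Edge.tLoop

lemma yseq_ne_star (u : List A) (j : ℤ) : yseq u j ≠ .star := by
  rw [yseq]
  split
  · intro h; cases h
  · split <;> (intro h; cases h)

lemma yseq_at_zero (u : List A) : yseq u 0 = .lm := by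
  have : ¬ ((1:ℤ) ≤ 0 ∧ (0:ℤ) ≤ (u.length:ℤ)) := by omega
  simp [yseq, this]

lemma yseq_at_letter (u : List A) (k : ℕ) (hk : k < u.length) :
    yseq u (1 + (k:ℤ)) = .letter (u.get ⟨k, hk⟩) := by
  have h1 : (1:ℤ) ≤ 1 + (k:ℤ) ∧ 1 + (k:ℤ) ≤ (u.length:ℤ) := by omega
  simp only [yseq, dif_pos h1]
  have e : ((1:ℤ) + (k:ℤ) - 1).toNat = k := by omega
  simp only [e]

lemma yseq_at_neg (u : List A) (j : ℤ) (hj : j < 0) : yseq u j = .ell := by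
  have h1 : ¬ ((1:ℤ) ≤ j ∧ j ≤ (u.length:ℤ)) := by omega
  have h2 : j ≠ 0 := by omega
  simp [yseq, h1, h2]

end Points
section HfSection

open LabeledGraph

variable {n : ℕ} {Q : Fin n → Type} {A : Type}

/-- The 2-vertex deterministic presentation, on `Fin 2`. -/
def Hf (A : Type) : LabeledGraph (Fin 2) (SymB A) where
  Edge := fun x c y =>
    (x = 0 ∧ y = 0 ∧ (c = .lm ∨ c = .ell ∨ ∃ a, c = .letter a)) ∨
    (x = 0 ∧ y = 1 ∧ c = .rm) ∨
    (x = 1 ∧ y = 1 ∧ c = .star)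

lemma Hf_det : (Hf A).Deterministic := by
  rintro p c q q' h h'
  rcases h with ⟨h1,h2,h3⟩|⟨h1,h2,h3⟩|⟨h1,h2,h3⟩ <;>
    rcases h' with ⟨g1,g2,g3⟩|⟨g1,g2,g3⟩|⟨g1,g2,g3⟩ <;> subst_vars <;>
      first
        | rfl
        | simp_all

lemma Hf_ess : (Hf A).Essential := by
  intro q
  fin_cases q
  · exact ⟨⟨.ell, 0, Or.inl ⟨rfl, rfl, Or.inr (Or.inl rfl)⟩⟩,
           ⟨.ell, 0, Or.inl ⟨rfl, rfl, Or.inr (Or.inl rfl)⟩⟩⟩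
  · exact ⟨⟨.star, 1, Or.inr (Or.inr ⟨rfl, rfl, rfl⟩)⟩,
           ⟨.star, 1, Or.inr (Or.inr ⟨rfl, rfl, rfl⟩)⟩⟩

/-- Projection of vertices of `G` to the two-vertex graph. -/
def v2map : V2 Q → Fin 2 := fun v =>
  match v with
  | .t => 1
  | .sstar => 0
  | .st _ _ => 0

lemma edge_map {M : ∀ i, DFA' (Q i) A} {p : V2 Q} {c : SymB A} {r : V2 Q}
    (h : Red2Edge M p c r) : (Hf A).Edge (v2map p) c (v2map r) := by
  cases h with
  | tLoop => exact Or.inr (Or.inr ⟨rfl, rfl, rfl⟩)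
  | sstarLetter a => exact Or.inl ⟨rfl, rfl, Or.inr (Or.inr ⟨a, rfl⟩)⟩
  | sstarEll => exact Or.inl ⟨rfl, rfl, Or.inr (Or.inl rfl)⟩
  | sstarExit => exact Or.inr (Or.inl ⟨rfl, rfl, rfl⟩)
  | dfaStep i q a => exact Or.inl ⟨rfl, rfl, Or.inr (Or.inr ⟨a, rfl⟩)⟩
  | back i q => exact Or.inl ⟨rfl, rfl, Or.inl rfl⟩
  | exitAcc i q hq => exact Or.inr (Or.inl ⟨rfl, rfl, rfl⟩)
  | ellLoop i q => exact Or.inl ⟨rfl, rfl, Or.inr (Or.inl rfl)⟩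

lemma red2_shift_subset_Hf (M : ∀ i, DFA' (Q i) A) : (Red2 M).shift ⊆ (Hf A).shift := by
  rintro x ⟨v, hv⟩
  exact ⟨fun j => v2map (v j), fun j => edge_map (hv j)⟩

lemma v2_finite [∀ i, Fintype (Q i)] : Finite (V2 Q) := by
  apply Finite.of_injective (fun v : V2 Q =>
    match v with
    | .t => (none : Option (Option (Σ i, Q i)))
    | .sstar => some none
    | .st i q => some (some ⟨i, q⟩))
  rintro ⟨⟩ ⟨⟩ h <;> simp_all

/-- A window of the sequence `x` from position `K` (inclusive) to `j` (exclusive). -/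
def winList (x : ℤ → SymB A) (K j : ℤ) : List (SymB A) :=
  (List.range (j - K).toNat).map (fun k : ℕ => x (K + (k:ℤ)))

lemma winList_succ (x : ℤ → SymB A) (K j : ℤ) (h : K ≤ j) :
    winList x K (j+1) = winList x K j ++ [x j] := by
  rw [winList, winList]
  have e : (j + 1 - K).toNat = (j - K).toNat + 1 := by omega
  rw [e, List.range_succ, List.map_append]
  simp only [List.map_cons, List.map_nil]
  have e2 : K + (((j - K).toNat : ℕ) : ℤ) = j := by omega
  rw [e2]

lemma fold_winList_succ {B : Type} (f : B → SymB A → B) (b : B) (x : ℤ → SymB A)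
    (K j : ℤ) (h : K ≤ j) :
    List.foldl f b (winList x K (j+1)) = f (List.foldl f b (winList x K j)) (x j) := by
  rw [winList_succ x K j h, List.foldl_append]
  rfl

lemma Hf_shift_subset_red2 [∀ i, Fintype (Q i)] (hn : 0 < n)
    (M : ∀ i, DFA' (Q i) A) (hU : ∀ w : List A, ∃ i, w ∈ (M i).lang) :
    (Hf A).shift ⊆ (Red2 M).shift := by
  classical
  rintro x ⟨v, hv⟩
  haveI : Nonempty (V2 Q) := ⟨.t⟩
  haveI : Finite (V2 Q) := v2_finite
  have two : ∀ e : Fin 2, e = 0 ∨ e = 1 := by decide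
  have hstep : ∀ j, v j = 1 → v (j+1) = 1 ∧ x j = .star := by
    intro j h
    rcases hv j with ⟨h1,h2,h3⟩|⟨h1,h2,h3⟩|⟨h1,h2,h3⟩
    · rw [h] at h1; exact absurd h1 (by decide)
    · rw [h] at h1; exact absurd h1 (by decide)
    · exact ⟨h2, h3⟩
  have hmono : ∀ j j' : ℤ, j ≤ j' → v j = 1 → v j' = 1 := by
    intro j j' hle h
    exact Int.le_induction h (fun k _ hk => (hstep k hk).1) j' hle
  by_cases hall1 : ∀ j, v j = 1
  · refine ⟨fun _ => V2.t, fun j => ?_⟩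
    rw [(hstep j (hall1 j)).2]
    exact Red2Edge.tLoop
  push_neg at hall1
  obtain ⟨j2, hj2⟩ := hall1
  have hj2' : v j2 = 0 := (two (v j2)).resolve_right hj2
  by_cases hex1 : ∃ j, v j = 1
  · -- mixed case: find the boundary j0
    obtain ⟨j1, hj1⟩ := hex1
    have hlt : j2 < j1 := by
      by_contra hcon
      push_neg at hcon
      exact hj2 (hmono j1 j2 hcon hj1)
    have hP : ∃ k : ℕ, v (j2 + (k:ℤ)) = 1 :=
      ⟨(j1 - j2).toNat, by rw [show j2 + (((j1-j2).toNat:ℕ):ℤ) = j1 by omega]; exact hj1⟩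
    set k0 := Nat.find hP with hk0def
    have hk0 : v (j2 + (k0:ℤ)) = 1 := Nat.find_spec hP
    have hk0pos : k0 ≠ 0 := by
      intro h
      rw [h] at hk0
      norm_num at hk0
      exact hj2 hk0
    set j0 : ℤ := j2 + ((k0 - 1 : ℕ):ℤ) with hj0def
    have hj0 : v j0 = 0 := by
      refine (two _).resolve_right ?_
      exact Nat.find_min hP (show k0 - 1 < k0 by omega)
    have hj01 : v (j0 + 1) = 1 := by
      rw [show j0 + 1 = j2 + (k0:ℤ) by rw [hj0def]; omega]
      exact hk0
    have hrm : x j0 = .rm := by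
      rcases hv j0 with ⟨h1,h2,h3⟩|⟨h1,h2,h3⟩|⟨h1,h2,h3⟩
      · rw [hj01] at h2; exact absurd h2 (by decide)
      · exact h3
      · rw [hj0] at h1; exact absurd h1 (by decide)
    have hstar : ∀ j, j0 < j → x j = .star := by
      intro j hj
      have hv1 : v j = 1 := hmono (j0+1) j (by omega) hj01
      exact (hstep j hv1).2
    have hzero : ∀ j, j ≤ j0 → v j = 0 := by
      intro j hj
      refine (two _).resolve_right ?_
      intro h1
      rw [hmono j j0 hj h1] at hj0
      exact absurd hj0 (by decide)
    have hlab : ∀ j, j < j0 → (x j = .lm ∨ x j = .ell ∨ ∃ a, x j = .letter a) := by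
      intro j hj
      rcases hv j with ⟨h1,h2,h3⟩|⟨h1,h2,h3⟩|⟨h1,h2,h3⟩
      · exact h3
      · rw [hzero (j+1) (by omega)] at h2; exact absurd h2 (by decide)
      · rw [hzero j (by omega)] at h1; exact absurd h1 (by decide)
    apply compact_run
    intro N
    set K := min (-(N:ℤ)) j0 with hKdef
    obtain ⟨i, hi⟩ := hU (List.foldl (gstep A) [] (winList x K j0))
    set S : ℤ → Q i := fun j => List.foldl (fstep M i) (M i).start (winList x K j) with hSdef
    have hacc : S j0 ∈ (M i).accept := by
      have e : S j0 = (M i).evalFrom (M i).start (List.foldl (gstep A) [] (winList x K j0)) :=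
        fold_strip M i (winList x K j0) []
      rw [e]
      exact hi
    refine ⟨fun j => if j ≤ j0 then V2.st i (S j) else V2.t, fun j hj => ?_⟩
    show Red2Edge M (if j ≤ j0 then V2.st i (S j) else V2.t) (x j)
      (if j + 1 ≤ j0 then V2.st i (S (j+1)) else V2.t)
    have hKj : K ≤ j := le_trans (min_le_left _ _) hj
    rcases lt_trichotomy j j0 with h | h | h
    · rw [if_pos (by omega : j ≤ j0), if_pos (by omega : j + 1 ≤ j0)]
      rcases hlab j h with hl | hl | ⟨a, hl⟩
      · have e : S (j+1) = (M i).start := by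
          rw [hSdef]
          simp only
          rw [fold_winList_succ _ _ x K j hKj, hl]
          rfl
        rw [hl, e]
        exact Red2Edge.back i _
      · have e : S (j+1) = S j := by
          rw [hSdef]
          simp only
          rw [fold_winList_succ _ _ x K j hKj, hl]
          rfl
        rw [hl, e]
        exact Red2Edge.ellLoop i _
      · have e : S (j+1) = (M i).step (S j) a := by
          rw [hSdef]
          simp only
          rw [fold_winList_succ _ _ x K j hKj, hl]
          rfl
        rw [hl, e]
        exact Red2Edge.dfaStep i _ a
    · rw [if_pos (by omega : j ≤ j0), if_neg (by omega : ¬ j + 1 ≤ j0), h, hrm]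
      exact Red2Edge.exitAcc i _ hacc
    · rw [if_neg (by omega : ¬ j ≤ j0), if_neg (by omega : ¬ j + 1 ≤ j0), hstar j h]
      exact Red2Edge.tLoop
  · -- all-zero case
    push_neg at hex1
    have hz : ∀ j, v j = 0 := fun j => (two (v j)).resolve_right (hex1 j)
    have hlab : ∀ j, x j = .lm ∨ x j = .ell ∨ ∃ a, x j = .letter a := by
      intro j
      rcases hv j with ⟨h1,h2,h3⟩|⟨h1,h2,h3⟩|⟨h1,h2,h3⟩
      · exact h3
      · rw [hz (j+1)] at h2; exact absurd h2 (by decide)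
      · rw [hz j] at h1; exact absurd h1 (by decide)
    apply compact_run
    intro N
    set K : ℤ := -(N:ℤ) with hKdef
    set i : Fin n := ⟨0, hn⟩
    set S : ℤ → Q i := fun j => List.foldl (fstep M i) (M i).start (winList x K j) with hSdef
    refine ⟨fun j => V2.st i (S j), fun j hj => ?_⟩
    show Red2Edge M (V2.st i (S j)) (x j) (V2.st i (S (j+1)))
    have hKj : K ≤ j := hj
    rcases hlab j with hl | hl | ⟨a, hl⟩
    · have e : S (j+1) = (M i).start := by
        rw [hSdef]
        simp only
        rw [fold_winList_succ _ _ x K j hKj, hl]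
        rfl
      rw [hl, e]
      exact Red2Edge.back i _
    · have e : S (j+1) = S j := by
        rw [hSdef]
        simp only
        rw [fold_winList_succ _ _ x K j hKj, hl]
        rfl
      rw [hl, e]
      exact Red2Edge.ellLoop i _
    · have e : S (j+1) = (M i).step (S j) a := by
        rw [hSdef]
        simp only
        rw [fold_winList_succ _ _ x K j hKj, hl]
        rfl
      rw [hl, e]
      exact Red2Edge.dfaStep i _ a

end HfSection
/-- Let `M_1, …, M_n` be DFAs over a common alphabet `Σ`, and let `G` be the
graph of the second reduction construction. Then `⋃ᵢ L(Mᵢ) = Σ*` iff `⟨G⟩`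
has a deterministic presentation with exactly 2 vertices. -/
theorem stmt15 {n : ℕ} {Q : Fin n → Type} {A : Type}
    [Fintype A] [∀ i, Fintype (Q i)] (hn : 0 < n)
    (M : ∀ i, DFA' (Q i) A) :
    (⋃ i, (M i).lang) = Set.univ ↔
      ∃ H : LabeledGraph (Fin 2) (SymB A),
        H.Deterministic ∧ H.Essential ∧ H.shift = (Red2 M).shift := by
  constructor
  · -- forward direction
    intro hUU
    have hU : ∀ w : List A, ∃ i, w ∈ (M i).lang := by
      intro w
      have : w ∈ ⋃ i, (M i).lang := by rw [hUU]; trivial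
      exact Set.mem_iUnion.1 this
    exact ⟨Hf A, Hf_det, Hf_ess,
      Set.Subset.antisymm (Hf_shift_subset_red2 hn M hU) (red2_shift_subset_Hf M)⟩
  · -- backward direction
    rintro ⟨H, hdet, hess, hsh⟩
    rw [Set.eq_univ_iff_forall]
    intro u
    rw [Set.mem_iUnion]
    obtain ⟨vy, hvy⟩ : yseq u ∈ H.shift := by rw [hsh]; exact yseq_mem M hn u
    obtain ⟨vz, hvz⟩ : zseq A ∈ H.shift := by rw [hsh]; exact zseq_mem M
    have hOut : ∀ (p q r : Fin 2) (c c' : SymB A), H.Edge p c q → H.Edge q c' r →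
        (c = .star ∨ c = .rm) → c' = .star := by
      intro p q r c c' h h' hc
      obtain ⟨xw, hxw, hx0, hx1⟩ := realize2 H hess h h'
      have hxG : xw ∈ (Red2 M).shift := by rw [← hsh]; exact hxw
      have hstar := redG_after M hxG 0 (by rw [hx0]; exact hc)
      rw [show (0:ℤ)+1 = 1 by norm_num] at hstar
      rw [← hx1]
      exact hstar
    have hz0 : zseq A 0 = .rm := by norm_num [zseq]
    have hzneg : ∀ j : ℤ, j < 0 → zseq A j = .ell := by
      intro j hj; simp [zseq, hj]
    have hzpos : ∀ j : ℤ, 0 < j → zseq A j = .star := by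
      intro j hj
      have h1 : ¬ j < 0 := by omega
      have h2 : j ≠ 0 := by omega
      simp [zseq, h1, h2]
    have Ecd : H.Edge (vz 0) .rm (vz 1) := by
      have h := hvz 0
      rw [hz0] at h
      rw [show (0:ℤ)+1 = 1 by norm_num] at h
      exact h
    have hcd : vz 0 ≠ vz 1 := by
      intro h
      have := hOut (vz 0) (vz 1) (vz 1) .rm .rm Ecd (h ▸ Ecd) (Or.inr rfl)
      cases this
    have htwo : ∀ e cc dd : Fin 2, cc ≠ dd → e = cc ∨ e = dd := by decide
    have hyc : ∀ j, vy j = vz 0 := by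
      intro j
      refine ((htwo (vy j) (vz 0) (vz 1) hcd).resolve_right ?_)
      intro hd
      have hedge := hvy j
      rw [hd] at hedge
      have := hOut (vz 0) (vz 1) (vy (j+1)) .rm (yseq u j) Ecd hedge (Or.inr rfl)
      exact yseq_ne_star u j this
    have hzd : ∀ k : ℕ, vz (1 + (k:ℤ)) = vz 1 := by
      intro k
      induction k with
      | zero => norm_num
      | succ k ih =>
        have hedge := hvz (1 + (k:ℤ))
        rw [hzpos (1 + (k:ℤ)) (by omega), ih] at hedge
        have : vz (1 + (k:ℤ) + 1) ≠ vz 0 := by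
          intro hc
          rw [hc] at hedge
          have := hOut (vz 1) (vz 0) (vz 1) .star .rm hedge Ecd (Or.inl rfl)
          cases this
        have := (htwo (vz (1 + (k:ℤ) + 1)) (vz 0) (vz 1) hcd).resolve_left this
        rw [show 1 + ((k+1:ℕ):ℤ) = 1 + (k:ℤ) + 1 by push_cast; ring]
        exact this
    have Ed : H.Edge (vz 1) .star (vz 1) := by
      have h := hvz 1
      rw [hzpos 1 one_pos] at h
      have e2 : vz (1+1) = vz 1 := by
        have := hzd 1
        rw [show (1:ℤ) + ((1:ℕ):ℤ) = 1 + 1 by norm_num] at this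
        exact this
      rw [e2] at h
      exact h
    have hL0 : (0:ℤ) ≤ (u.length:ℤ) := by positivity
    have hxmem : xseq u ∈ H.shift := by
      refine ⟨fun j => if j ≤ (u.length:ℤ) + 1 then vz 0 else vz 1, fun j => ?_⟩
      show H.Edge (if j ≤ (u.length:ℤ) + 1 then vz 0 else vz 1) (xseq u j)
        (if j + 1 ≤ (u.length:ℤ) + 1 then vz 0 else vz 1)
      rcases lt_trichotomy j ((u.length:ℤ)+1) with h | h | h
      · have h1 : j ≤ (u.length:ℤ) := by omega
        rw [if_pos (by omega : j ≤ (u.length:ℤ)+1), if_pos (by omega : j+1 ≤ (u.length:ℤ)+1)]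
        rw [xseq]
        simp only [if_pos h1]
        have hedge := hvy j
        rw [hyc j, hyc (j+1)] at hedge
        exact hedge
      · rw [h]
        rw [if_pos (le_refl _), if_neg (by omega : ¬ (u.length:ℤ)+1+1 ≤ (u.length:ℤ)+1)]
        rw [xseq]
        simp only [if_neg (by omega : ¬ (u.length:ℤ)+1 ≤ (u.length:ℤ)), if_pos rfl]
        exact Ecd
      · rw [if_neg (by omega : ¬ j ≤ (u.length:ℤ)+1), if_neg (by omega : ¬ j+1 ≤ (u.length:ℤ)+1)]
        rw [xseq]
        simp only [if_neg (by omega : ¬ j ≤ (u.length:ℤ)), if_neg (by omega : ¬ j = (u.length:ℤ)+1)]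
        exact Ed
    have hxG : xseq u ∈ (Red2 M).shift := by rw [← hsh]; exact hxmem
    refine extract M u (xseq u) hxG ?_ ?_ ?_
    · rw [xseq]
      simp only [if_pos hL0]
      exact yseq_at_zero u
    · intro k hk
      rw [xseq]
      simp only [if_pos (by omega : 1 + (k:ℤ) ≤ (u.length:ℤ))]
      exact yseq_at_letter u k hk
    · rw [xseq]
      simp only [if_neg (by omega : ¬ 1 + (u.length:ℤ) ≤ (u.length:ℤ)),
        if_pos (by omega : 1 + (u.length:ℤ) = (u.length:ℤ)+1)]
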